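/- With the same setup, for any set S contained in the interval (R*(D')+b, R*(D)+b] (where P(R(D') ∈ S) = 0), using the symmetry of Z, P(R(D) ∈ S) ≤ P(Z < Δ − b) = G(Δ−1). Hence on such sets the mechanism satisfies the (0, G(Δ−1))-differential privacy inequality. -/

import Mathlib

/-- TAP's bounded-noise mechanism, region `A₄ = (R*(D')+b, R*(D)+b]`: using the symmetry
of `Z`, for any `S ⊆ A₄`, `P(R(D') ∈ S) = 0` and `P(R(D) ∈ S) ≤ P(Z < Δ - b) = G (Δ - 1)`,
i.e. the `(0, G(Δ-1))`-differential-privacy inequality holds on such sets. -/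
theorem tap_dp_region_A4 (b Δ : ℕ) (hbΔ : Δ ≤ b)
    (RD RD' : ℤ) (hlt : RD' < RD) (hsens : |RD - RD'| ≤ (Δ : ℤ))
    (p : ℤ → ℝ) (hp : ∀ z, 0 ≤ p z)
    (hsupp : ∀ z : ℤ, p z ≠ 0 → -(b : ℤ) ≤ z ∧ z ≤ (b : ℤ))
    (hsym : ∀ z : ℤ, p (-z) = p z)
    (g : ℕ → ℝ) (hg : ∀ x, 0 ≤ g x)
    (G : ℕ → ℝ) (hG : ∀ z, G z = ∑ x ∈ Finset.range (z + 1), g x)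
    (hnorm : g 0 + 2 * G (b - 1) = 1)
    (hcdf : ∀ z : ℤ, -(b : ℤ) ≤ z → z ≤ 0 →
      (∑ x ∈ Finset.Icc (-(b : ℤ)) z, p x) = G (z + b).toNat) :
    ∀ S : Finset ℤ, (∀ a ∈ S, RD' + (b : ℤ) < a ∧ a ≤ RD + (b : ℤ)) →
      (∑ a ∈ S, p (a - RD')) = 0 ∧ (∑ a ∈ S, p (a - RD)) ≤ G (Δ - 1) := by
  intro S hS
  have hΔ1 : 1 ≤ Δ := by
    by_contra h
    have : Δ = 0 := by omega
    rw [this] at hsens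
    simp at hsens
    have := abs_nonneg (RD - RD')
    have : RD = RD' := by omega
    omega
  have habs : RD - RD' ≤ (Δ : ℤ) := le_of_abs_le hsens
  constructor
  · apply Finset.sum_eq_zero
    intro a ha
    by_contra hne
    have := (hsupp _ hne).2
    have := (hS a ha).1
    omega
  · -- key: sum over Icc (b-Δ+1) b equals G (Δ-1)
    have key : (∑ x ∈ Finset.Icc ((b : ℤ) - Δ + 1) b, p x) = G (Δ - 1) := by
      have hsymm : (∑ x ∈ Finset.Icc ((b : ℤ) - Δ + 1) b, p x)
          = ∑ x ∈ Finset.Icc (-(b : ℤ)) ((Δ : ℤ) - 1 - b), p x := by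
        apply Finset.sum_nbij' (fun x => -x) (fun x => -x)
        · intro a ha
          simp only [Finset.mem_Icc] at ha ⊢
          omega
        · intro a ha
          simp only [Finset.mem_Icc] at ha ⊢
          omega
        · intro a _; ring
        · intro a _; ring
        · intro a _; exact (hsym a).symm
      rw [hsymm, hcdf ((Δ : ℤ) - 1 - b) (by omega) (by omega)]
      congr 1
      omega
    rw [← key]
    have himg : (∑ a ∈ S, p (a - RD)) = ∑ x ∈ S.image (fun a => a - RD), p x := by
      rw [Finset.sum_image]
      intro x _ y _ h
      have h' : x - RD = y - RD := h
      omega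
    rw [himg]
    apply Finset.sum_le_sum_of_subset_of_nonneg
    · intro x hx
      simp only [Finset.mem_image] at hx
      obtain ⟨a, ha, rfl⟩ := hx
      have := hS a ha
      simp only [Finset.mem_Icc]
      omega
    · intro x _ _; exact hp x
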